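/- Let ρ : g → gl(V) be a finite-dimensional representation of a Lie algebra g, and let h ≤ g be a Lie subalgebra such that ρ(h) is a nilpotent subalgebra acting by nilpotent endomorphisms. Then h is contained in the orthogonal complement of its normalizer n_g(h) with respect to the trace form of ρ. -/

import Mathlib

attribute [local instance 100] LieRing.ofAssociativeRing

/-- If `h ≤ g` is a subalgebra such that `ρ(h)` is a nilpotent subalgebra
acting by nilpotent endomorphisms on `V`, then `h` is orthogonal to its normalizer
`n_g(h)` with respect to the trace form of `ρ`. -/
theorem subalgebra_perp_normalizer
    (K L V : Type*) [Field K] [CharZero K] [LieRing L] [LieAlgebra K L]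
    [FiniteDimensional K L]
    [AddCommGroup V] [Module K V] [LieRingModule L V] [LieModule K L V]
    [FiniteDimensional K V]
    (h : LieSubalgebra K L)
    (hnilpEl : ∀ x ∈ h, IsNilpotent (LieModule.toEnd K L V x))
    (hnilpAlg : LieRing.IsNilpotent (h.map (LieModule.toEnd K L V : L →ₗ⁅K⁆ Module.End K V))) :
    ∀ x ∈ h, ∀ y ∈ h.normalizer,
      LinearMap.trace K V (LieModule.toEnd K L V x ∘ₗ LieModule.toEnd K L V y) = 0 := by
  intro x hx y hy
  -- Engel: V is a nilpotent h-module
  have hEngel : LieModule.IsNilpotent h V := by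
    rw [LieModule.isNilpotent_iff_forall' (R := K) (L := h) (M := V)]
    intro z
    have : LieModule.toEnd K h V z = LieModule.toEnd K L V (z : L) := by
      ext v; rfl
    rw [this]
    exact hnilpEl _ z.2
  obtain ⟨k, hk⟩ := (LieModule.isNilpotent_iff K h V).mp hEngel
  -- the filtration
  set W : ℕ → Submodule K V := fun i => (LieModule.lowerCentralSeries K h V i : Submodule K V)
    with hW
  have hW0 : W 0 = ⊤ := rfl
  have hWk : W k = ⊥ := by rw [hW]; simp [hk]
  -- x-step: elements of h move W i into W (i+1)
  have hxstep : ∀ z ∈ h, ∀ i, ∀ v ∈ W i, ⁅z, v⁆ ∈ W (i + 1) := by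
    intro z hz i v hv
    have : ⁅(⟨z, hz⟩ : h), v⁆ ∈ LieModule.lowerCentralSeries K h V (i + 1) := by
      rw [LieModule.lowerCentralSeries_succ]
      exact LieSubmodule.lie_mem_lie (LieSubmodule.mem_top _) hv
    exact this
  -- y-step: the normalizer element preserves each W i
  have hystep : ∀ i, ∀ v ∈ W i, ⁅y, v⁆ ∈ W i := by
    intro i
    induction i with
    | zero => intro v _; exact Submodule.mem_top
    | succ i ih =>
      intro v hv
      have hspan : W (i + 1) =
          Submodule.span K {m : V | ∃ z ∈ (⊤ : LieIdeal K h), ∃ n ∈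
            LieModule.lowerCentralSeries K h V i, ⁅z, n⁆ = m} := by
        show (LieModule.lowerCentralSeries K h V (i + 1) : Submodule K V) = _
        rw [LieModule.lowerCentralSeries_succ]
        exact LieSubmodule.lieIdeal_oper_eq_linear_span' ..
      rw [hspan] at hv
      induction hv using Submodule.span_induction with
      | mem m hm =>
        obtain ⟨z, -, n, hn, rfl⟩ := hm
        have hzL : (z : L) ∈ h := z.2
        have hbr : ⁅y, ⁅(z : L), n⁆⁆ = ⁅⁅y, (z : L)⁆, n⁆ + ⁅(z : L), ⁅y, n⁆⁆ :=
          leibniz_lie y (z : L) n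
        have h1 : ⁅⁅y, (z : L)⁆, n⁆ ∈ W (i + 1) := by
          have hyz : ⁅y, (z : L)⁆ ∈ h := (h.mem_normalizer_iff y).mp hy _ hzL
          exact hxstep _ hyz i n hn
        have h2 : ⁅(z : L), ⁅y, n⁆⁆ ∈ W (i + 1) := hxstep _ hzL i _ (ih n hn)
        rw [show (⁅z, n⁆ : V) = ⁅(z : L), n⁆ from rfl, hbr]
        exact Submodule.add_mem _ h1 h2
      | zero => simp
      | add a b _ _ ha hb => rw [lie_add]; exact Submodule.add_mem _ ha hb
      | smul t a _ ha => rw [lie_smul]; exact Submodule.smul_mem _ t ha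
  -- hence ρ(x) ∘ ρ(y) is nilpotent
  set f : Module.End K V := LieModule.toEnd K L V x ∘ₗ LieModule.toEnd K L V y with hf
  have hfn : ∀ n, ∀ v, (f ^ n) v ∈ W n := by
    intro n
    induction n with
    | zero => intro v; exact Submodule.mem_top
    | succ n ih =>
      intro v
      rw [pow_succ']
      have h1 : (LieModule.toEnd K L V y) ((f ^ n) v) ∈ W n :=
        hystep n _ (ih v)
      exact hxstep x hx n _ h1
  have hnil : IsNilpotent f := by
    refine ⟨k, ?_⟩
    ext v
    have := hfn k v
    rw [hWk] at this
    simpa using this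
  have := LinearMap.isNilpotent_trace_of_isNilpotent hnil
  exact this.eq_zero
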